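/- Let N ≥ 2 and let W = [[1, 0ᵀ],[c, W̄]] ∈ ℝ^{N×N} be nonnegative and row-stochastic (c ∈ ℝ^{N−1} nonnegative, W̄ ∈ ℝ^{(N−1)×(N−1)} nonnegative, c + W̄ 1_{N−1} = 1_{N−1}). Let X ∈ ℝ^{N×N} be symmetric positive definite with σ := ‖W − 1_N e_1ᵀ‖_X < 1, and partition X = [[X_{11}, X_{12}],[X_{12}ᵀ, X_{22}]] with X_{22} ∈ ℝ^{(N−1)×(N−1)}. Define Q := [[1 + 1ᵀ X_{22} 1, −1ᵀ X_{22}],[−X_{22} 1, X_{22}]]. Then: (a) e_1ᵀ W = e_1ᵀ, so q := e_1 is a nonnegative vector with qᵀ W = qᵀ and 1_Nᵀ q = 1; (b) Q is symmetric positive definite; (c) 1_Nᵀ Q = e_1ᵀ, so in particular the first entry of 1_Nᵀ Q equals 1; (d) 1_Nᵀ Q W (I_N − 1_N e_1ᵀ) = 0ᵀ; (e) ‖W − 1_N e_1ᵀ‖_Q ≤ σ < 1. -/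

import Mathlib

open Matrix Finset

/-- Leader–follower weight matrix `W = [[1, 0ᵀ],[c, W̄]]` (row-stochastic, nonnegative):
with `X ≻ 0` such that `σ = ‖W − 1e₁ᵀ‖_X < 1`, the matrix
`Q = [[1 + 1ᵀX₂₂1, −1ᵀX₂₂],[−X₂₂1, X₂₂]]` is symmetric positive definite and satisfies
`e₁ᵀW = e₁ᵀ`, `1ᵀQ = e₁ᵀ`, `1ᵀQW(I − 1e₁ᵀ) = 0ᵀ` and `‖W − 1e₁ᵀ‖_Q ≤ σ < 1`. -/
theorem stmt_14 (n : ℕ) (W : Matrix (Fin (n + 2)) (Fin (n + 2)) ℝ)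
    (hWnn : ∀ i j, 0 ≤ W i j)
    (hWrow : W *ᵥ (1 : Fin (n + 2) → ℝ) = 1)
    (hW00 : W 0 0 = 1) (hWtop : ∀ j, j ≠ 0 → W 0 j = 0)
    (X : Matrix (Fin (n + 2)) (Fin (n + 2)) ℝ)
    (hXsym : X.IsSymm) (hXpd : X.PosDef)
    (J : Matrix (Fin (n + 2)) (Fin (n + 2)) ℝ)
    (hJ : J = Matrix.of fun _ j => if j = 0 then (1 : ℝ) else 0)
    (σ : ℝ)
    (hσ : IsLeast {c : ℝ | 0 ≤ c ∧ ∀ v : Fin (n + 2) → ℝ,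
        Real.sqrt (((W - J) *ᵥ v) ⬝ᵥ (X *ᵥ ((W - J) *ᵥ v)))
          ≤ c * Real.sqrt (v ⬝ᵥ (X *ᵥ v))} σ)
    (hσlt : σ < 1)
    (Q : Matrix (Fin (n + 2)) (Fin (n + 2)) ℝ)
    (hQ : Q = Matrix.of fun i j =>
      if i = 0 then
        (if j = 0 then
          1 + ∑ a ∈ univ.filter (· ≠ (0 : Fin (n + 2))),
              ∑ b ∈ univ.filter (· ≠ (0 : Fin (n + 2))), X a b
         else -∑ a ∈ univ.filter (· ≠ (0 : Fin (n + 2))), X a j)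
      else
        (if j = 0 then -∑ b ∈ univ.filter (· ≠ (0 : Fin (n + 2))), X i b
         else X i j)) :
    -- (a) e₁ᵀ W = e₁ᵀ, q := e₁ is nonnegative with qᵀW = qᵀ and 1ᵀq = 1
    ((Pi.single 0 1 : Fin (n + 2) → ℝ) ᵥ* W = Pi.single 0 1 ∧
      (∀ j, 0 ≤ (Pi.single 0 1 : Fin (n + 2) → ℝ) j) ∧
      ∑ j, (Pi.single 0 1 : Fin (n + 2) → ℝ) j = 1) ∧
    -- (b) Q is symmetric positive definite
    (Q.IsSymm ∧ Q.PosDef) ∧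
    -- (c) 1ᵀ Q = e₁ᵀ
    ((1 : Fin (n + 2) → ℝ) ᵥ* Q = Pi.single 0 1) ∧
    -- (d) 1ᵀ Q W (I − 1e₁ᵀ) = 0ᵀ
    ((1 : Fin (n + 2) → ℝ) ᵥ* (Q * W * (1 - J)) = 0) ∧
    -- (e) ‖W − 1e₁ᵀ‖_Q ≤ σ < 1
    ((∀ v : Fin (n + 2) → ℝ,
        Real.sqrt (((W - J) *ᵥ v) ⬝ᵥ (Q *ᵥ ((W - J) *ᵥ v)))
          ≤ σ * Real.sqrt (v ⬝ᵥ (Q *ᵥ v))) ∧ σ < 1) := by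
  -- Basic facts about J and W
  have hJ1 : ∀ v : Fin (n + 2) → ℝ, J *ᵥ v = fun _ => v 0 := by
    intro v; funext i
    simp [hJ, mulVec, dotProduct, ite_mul]
  have hrowsum : ∀ i, ∑ k, W i k = 1 := by
    intro i
    have := congrFun hWrow i
    simpa [mulVec, dotProduct] using this
  have hJJ : J * J = J := by
    ext i j
    simp only [hJ, Matrix.mul_apply, Matrix.of_apply, mul_ite, mul_one, mul_zero]
    by_cases hj : j = 0 <;> simp [hj]
  have hWJ : W * J = J := by
    ext i j
    simp only [hJ, Matrix.mul_apply, Matrix.of_apply, mul_ite, mul_one, mul_zero]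
    by_cases hj : j = 0 <;> simp [hj, hrowsum i]
  have hWrow0 : ∀ k, W 0 k = if k = 0 then 1 else 0 := by
    intro k; by_cases h : k = 0
    · simp [h, hW00]
    · simp [h, hWtop k h]
  -- The key decomposition of Q
  have hQE : Q = Matrix.single 0 0 1 + (1 - J)ᵀ * X * (1 - J) := by
    ext i j
    have hfil : ∀ f : Fin (n + 2) → ℝ, ∑ a ∈ univ.filter (· ≠ (0 : Fin (n + 2))), f a
        = (∑ a, f a) - f 0 := by
      intro f
      rw [Finset.filter_ne', Finset.sum_erase_eq_sub (mem_univ _)]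
    simp only [hQ, hJ, Matrix.add_apply, Matrix.mul_apply, Matrix.transpose_apply,
      Matrix.sub_apply, Matrix.one_apply, Matrix.of_apply, Matrix.single,
      hfil, sub_mul, mul_sub, Finset.sum_sub_distrib]
    by_cases hi : i = 0 <;> by_cases hj : j = 0 <;>
      simp [hi, hj, Finset.sum_ite_eq', Finset.sum_ite_eq, mul_ite, ite_mul,
        Finset.sum_sub_distrib, Finset.mul_sum, Finset.sum_mul] <;>
      first
        | (rw [Finset.sum_comm]; ring)
        | (exact fun h => hj h.symm)
        | (exact fun h => hi h.symm)
        | (exact fun h h2 => hj h2.symm)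
  -- Quadratic form of Q
  have hquad : ∀ v : Fin (n + 2) → ℝ, v ⬝ᵥ (Q *ᵥ v)
      = v 0 * v 0 + ((1 - J) *ᵥ v) ⬝ᵥ (X *ᵥ ((1 - J) *ᵥ v)) := by
    intro v
    rw [hQE, Matrix.add_mulVec, dotProduct_add]
    congr 1
    · simp [Matrix.single, mulVec, dotProduct, ite_and, mul_ite, mul_zero,
        Finset.sum_ite_eq, Finset.sum_ite_eq', eq_comm]
    · rw [← Matrix.mulVec_mulVec, ← Matrix.mulVec_mulVec, Matrix.dotProduct_mulVec,
        Matrix.vecMul_transpose]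
  have hXnn : ∀ w : Fin (n + 2) → ℝ, 0 ≤ w ⬝ᵥ (X *ᵥ w) := by
    intro w; simpa using (posSemidef_iff_dotProduct_mulVec.mp hXpd.posSemidef).2 w
  -- (a)
  have ha1 : (Pi.single 0 1 : Fin (n + 2) → ℝ) ᵥ* W = Pi.single 0 1 := by
    rw [Matrix.single_one_vecMul]
    funext j
    show W 0 j = _
    rw [hWrow0 j, Pi.single_apply]
  -- (b) symmetry
  have hQsym : Q.IsSymm := by
    rw [Matrix.IsSymm, hQE, Matrix.transpose_add, Matrix.transpose_mul,
      Matrix.transpose_mul, Matrix.transpose_transpose, hXsym, Matrix.mul_assoc]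
    congr 1
    ext i j
    simp only [Matrix.transpose_apply, Matrix.single]
    by_cases hi : i = 0 <;> by_cases hj : j = 0 <;> simp [hi, hj, and_comm]
  -- (b) positive definiteness
  have hQpd : Q.PosDef := by
    rw [posDef_iff_dotProduct_mulVec]
    constructor
    · rw [Matrix.IsHermitian, Matrix.conjTranspose_eq_transpose_of_trivial]
      exact hQsym
    · intro x hx
      have h := hquad x
      simp only [star_trivial]
      rw [h]
      rcases eq_or_ne (x 0) 0 with h0 | h0
      · have hxM : (1 - J) *ᵥ x = x := by
          rw [Matrix.sub_mulVec, Matrix.one_mulVec, hJ1]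
          funext i; simp [h0]
        rw [h0, hxM]
        have := (posDef_iff_dotProduct_mulVec.mp hXpd).2 hx
        simpa using this
      · have h1 := hXnn ((1 - J) *ᵥ x)
        nlinarith [mul_self_pos.2 h0]
  -- (c)
  have hM1 : (1 - J) *ᵥ (1 : Fin (n + 2) → ℝ) = 0 := by
    rw [Matrix.sub_mulVec, Matrix.one_mulVec, hJ1]
    funext i; simp
  have hc : (1 : Fin (n + 2) → ℝ) ᵥ* Q = Pi.single 0 1 := by
    rw [hQE, Matrix.vecMul_add, ← Matrix.vecMul_vecMul, ← Matrix.vecMul_vecMul,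
      Matrix.vecMul_transpose, hM1, Matrix.zero_vecMul, Matrix.zero_vecMul, add_zero]
    funext j
    simp only [vecMul, dotProduct, Matrix.single, Pi.one_apply, one_mul,
      Pi.single_apply]
    by_cases hj : j = 0 <;> simp [hj, eq_comm]
  -- (d)
  have hd : (1 : Fin (n + 2) → ℝ) ᵥ* (Q * W * (1 - J)) = 0 := by
    rw [← Matrix.vecMul_vecMul, ← Matrix.vecMul_vecMul, hc, ha1, Matrix.vecMul_sub,
      Matrix.vecMul_one, Matrix.single_one_vecMul]
    funext j
    by_cases hj : j = 0 <;> simp [hj, hJ, Pi.single_apply]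
  -- (e)
  have hWJ1J : (W - J) * (1 - J) = W - J := by
    rw [Matrix.mul_sub, Matrix.mul_one, Matrix.sub_mul, hWJ, hJJ, sub_self, sub_zero]
  have he : ∀ v : Fin (n + 2) → ℝ,
      Real.sqrt (((W - J) *ᵥ v) ⬝ᵥ (Q *ᵥ ((W - J) *ᵥ v)))
        ≤ σ * Real.sqrt (v ⬝ᵥ (Q *ᵥ v)) := by
    intro v
    set u := (W - J) *ᵥ v with hu
    have hu0 : u 0 = 0 := by
      have hJv : (J *ᵥ v) 0 = v 0 := by rw [hJ1]
      have hWv : (W *ᵥ v) 0 = v 0 := by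
        simp only [mulVec, dotProduct]
        simp [hWrow0, ite_mul]
      simp [hu, Matrix.sub_mulVec, hWv, hJv]
    have hMu : (1 - J) *ᵥ u = u := by
      rw [Matrix.sub_mulVec, Matrix.one_mulVec, hJ1]
      funext i; simp [hu0]
    have hQu : u ⬝ᵥ (Q *ᵥ u) = u ⬝ᵥ (X *ᵥ u) := by
      rw [hquad u, hu0, hMu]; ring
    have h1 : (W - J) *ᵥ ((1 - J) *ᵥ v) = u := by
      rw [Matrix.mulVec_mulVec, hWJ1J]
    have h2 := hσ.1.2 ((1 - J) *ᵥ v)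
    rw [h1] at h2
    have h3 : Real.sqrt (((1 - J) *ᵥ v) ⬝ᵥ (X *ᵥ ((1 - J) *ᵥ v)))
        ≤ Real.sqrt (v ⬝ᵥ (Q *ᵥ v)) := by
      apply Real.sqrt_le_sqrt
      rw [hquad v]
      nlinarith [mul_self_nonneg (v 0)]
    calc Real.sqrt (u ⬝ᵥ (Q *ᵥ u)) = Real.sqrt (u ⬝ᵥ (X *ᵥ u)) := by rw [hQu]
      _ ≤ σ * Real.sqrt (((1 - J) *ᵥ v) ⬝ᵥ (X *ᵥ ((1 - J) *ᵥ v))) := h2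
      _ ≤ σ * Real.sqrt (v ⬝ᵥ (Q *ᵥ v)) := by
          exact mul_le_mul_of_nonneg_left h3 hσ.1.1
  refine ⟨⟨ha1, ?_, ?_⟩, ⟨hQsym, hQpd⟩, hc, hd, he, hσlt⟩
  · intro j
    rw [Pi.single_apply]
    positivity
  · simp
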